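/- Let S be a C-semigroup acting continuously on a Polish metric space (X,d), with the system topologically transitive. If the system is non-sensitive, then the set of equicontinuity points Eq(X) is dense in X. -/

import Mathlib

theorem polish_baireSpace (α : Type*) [TopologicalSpace α] [PolishSpace α] :
    BaireSpace α := by
  letI := TopologicalSpace.upgradeIsCompletelyMetrizable α
  exact BaireSpace.of_completelyPseudoMetrizable

/-- A topologically transitive non-sensitive system of a C-semigroup
on a Polish metric space has a dense set of equicontinuity points. -/
theorem stmt_12 {S X : Type*} [TopologicalSpace S] [Semigroup S] [MetricSpace X]
    [PolishSpace X] [SMul S X]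
    (hact : ∀ (s t : S) (x : X), (s * t) • x = s • t • x)
    (hcont : Continuous fun p : S × X => p.1 • p.2)
    (hC : ∀ s₀ : S, IsCompact (closure {s : S | ¬ ∃ t : S, t * s₀ = s}))
    (hTT : ∀ U V : Set X, IsOpen U → U.Nonempty → IsOpen V → V.Nonempty →
      ∃ s : S, ∃ v ∈ V, s • v ∈ U)
    (hns : ∀ c > (0:ℝ), ∃ x : X, ∃ δ > (0:ℝ), ∀ y : X, dist x y < δ →
      ∀ s : S, dist (s • x) (s • y) ≤ c) :
    Dense {x₀ : X | ∀ ε > 0, ∃ δ > 0, ∀ x : X, dist x₀ x < δ →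
      ∀ s : S, dist (s • x₀) (s • x) < ε} := by
  -- X is a Baire space, since it is Polish
  have hb : BaireSpace X := polish_baireSpace X
  -- the auxiliary open sets
  set A : ℕ → Set X := fun n =>
    {x₀ | ∃ δ > (0:ℝ), ∀ y z : X, dist x₀ y < δ → dist x₀ z < δ →
      ∀ s : S, dist (s • y) (s • z) ≤ 1 / (n + 1)} with hA
  have hsub : (⋂ n, A n) ⊆ {x₀ : X | ∀ ε > 0, ∃ δ > 0, ∀ x : X, dist x₀ x < δ →
      ∀ s : S, dist (s • x₀) (s • x) < ε} := by
    intro x₀ hx₀ ε hε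
    obtain ⟨n, hn⟩ := exists_nat_one_div_lt hε
    obtain ⟨δ, hδ, hδ'⟩ := Set.mem_iInter.1 hx₀ n
    refine ⟨δ, hδ, fun x hx s => ?_⟩
    calc dist (s • x₀) (s • x) ≤ 1 / (n + 1) :=
          hδ' x₀ x (by simpa using hδ) hx s
      _ < ε := hn
  refine Dense.mono hsub ?_
  refine dense_iInter_of_isOpen (fun n => ?_) (fun n => ?_)
  · -- each A n is open
    rw [Metric.isOpen_iff]
    rintro x₀ ⟨δ, hδ, hδ'⟩
    refine ⟨δ / 2, by linarith, fun x₁ hx₁ => ⟨δ / 2, by linarith, fun y z hy hz s => ?_⟩⟩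
    rw [Metric.mem_ball] at hx₁
    exact hδ' y z
      (lt_of_le_of_lt (dist_triangle x₀ x₁ y) (by rw [dist_comm x₁ x₀] at hx₁; linarith))
      (lt_of_le_of_lt (dist_triangle x₀ x₁ z) (by rw [dist_comm x₁ x₀] at hx₁; linarith)) s
  · -- each A n is dense
    rw [dense_iff_inter_open]
    intro U hU hUne
    have hεpos : (0:ℝ) < 1 / (n + 1) := by positivity
    -- non-sensitivity with constant (1/(n+1))/2
    obtain ⟨x, δ, hδ, hx⟩ := hns (1 / (n + 1) / 2) (by positivity)
    -- transitivity: move a point of U close to x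
    obtain ⟨s₀, v, hvU, hsv⟩ := hTT (Metric.ball x (δ / 2)) U
      Metric.isOpen_ball ⟨x, by simp [Metric.mem_ball, hδ]⟩ hU hUne
    rw [Metric.mem_ball, dist_comm] at hsv
    -- compact part of the semigroup
    set K : Set S := closure {s : S | ¬ ∃ t : S, t * s₀ = s} with hK
    -- tube lemma: uniform control on K near v
    have hOopen : IsOpen {p : S × X | dist (p.1 • v) (p.1 • p.2) < 1 / (n + 1) / 2} := by
      have : Continuous fun p : S × X => dist (p.1 • v) (p.1 • p.2) := by
        apply Continuous.dist
        · exact hcont.comp (continuous_fst.prodMk continuous_const)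
        · exact hcont
      exact isOpen_lt this continuous_const
    obtain ⟨u, w, hu, hw, hKu, hvw, huw⟩ := generalized_tube_lemma (hC s₀)
      (isCompact_singleton (x := v)) hOopen (by
        rintro ⟨s, y⟩ ⟨hs, hy⟩
        simp only [Set.mem_singleton_iff] at hy
        subst hy
        simp [dist_self, hεpos.le]
        positivity)
    have hvw' : v ∈ w := hvw rfl
    -- continuity of s₀ • · at v
    have hc₀ : Continuous fun y : X => s₀ • y :=
      hcont.comp (continuous_const.prodMk continuous_id)
    have : {y : X | dist (s₀ • v) (s₀ • y) < δ / 2} ∈ nhds v := by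
      have : ContinuousAt (fun y : X => dist (s₀ • v) (s₀ • y)) v :=
        (continuous_const.dist hc₀).continuousAt
      have h0 : dist (s₀ • v) (s₀ • v) < δ / 2 := by simp; linarith
      exact this.preimage_mem_nhds (IsOpen.mem_nhds (isOpen_Iio) (by simpa using h0))
    obtain ⟨η₁, hη₁, hball₁⟩ := Metric.mem_nhds_iff.1 this
    obtain ⟨η₂, hη₂, hball₂⟩ := Metric.mem_nhds_iff.1 ((hU.inter hw).mem_nhds ⟨hvU, hvw'⟩)
    -- the equicontinuity witness
    refine ⟨v, hvU, min η₁ η₂, lt_min hη₁ hη₂, fun y z hy hz s => ?_⟩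
    have hyU : y ∈ U ∩ w := hball₂ (Metric.mem_ball'.2 (lt_of_lt_of_le hy (min_le_right _ _)))
    have hzU : z ∈ U ∩ w := hball₂ (Metric.mem_ball'.2 (lt_of_lt_of_le hz (min_le_right _ _)))
    have hy₁ : dist (s₀ • v) (s₀ • y) < δ / 2 :=
      hball₁ (Metric.mem_ball'.2 (lt_of_lt_of_le hy (min_le_left _ _)))
    have hz₁ : dist (s₀ • v) (s₀ • z) < δ / 2 :=
      hball₁ (Metric.mem_ball'.2 (lt_of_lt_of_le hz (min_le_left _ _)))
    by_cases hcase : ∃ t : S, t * s₀ = s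
    · obtain ⟨t, rfl⟩ := hcase
      have hxy : dist x (s₀ • y) < δ := by
        calc dist x (s₀ • y) ≤ dist x (s₀ • v) + dist (s₀ • v) (s₀ • y) := dist_triangle _ _ _
          _ < δ / 2 + δ / 2 := by exact add_lt_add hsv hy₁
          _ = δ := by ring
      have hxz : dist x (s₀ • z) < δ := by
        calc dist x (s₀ • z) ≤ dist x (s₀ • v) + dist (s₀ • v) (s₀ • z) := dist_triangle _ _ _
          _ < δ / 2 + δ / 2 := by exact add_lt_add hsv hz₁
          _ = δ := by ring
      have h1 := hx (s₀ • y) hxy t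
      have h2 := hx (s₀ • z) hxz t
      rw [hact t s₀ y, hact t s₀ z]
      calc dist (t • s₀ • y) (t • s₀ • z)
          ≤ dist (t • s₀ • y) (t • x) + dist (t • x) (t • s₀ • z) := dist_triangle _ _ _
        _ ≤ 1 / (n + 1) / 2 + 1 / (n + 1) / 2 := by
            rw [dist_comm (t • s₀ • y) (t • x)]; exact add_le_add h1 h2
        _ = 1 / (n + 1) := by ring
    · have hsK : s ∈ K := subset_closure hcase
      have h1 : dist (s • v) (s • y) < 1 / (n + 1) / 2 := by
        simpa using huw (Set.mk_mem_prod (hKu hsK) hyU.2)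
      have h2 : dist (s • v) (s • z) < 1 / (n + 1) / 2 := by
        simpa using huw (Set.mk_mem_prod (hKu hsK) hzU.2)
      calc dist (s • y) (s • z) ≤ dist (s • y) (s • v) + dist (s • v) (s • z) :=
            dist_triangle _ _ _
        _ ≤ 1 / (n + 1) / 2 + 1 / (n + 1) / 2 := by
            rw [dist_comm (s • y) (s • v)]
            exact add_le_add h1.le h2.le
        _ = 1 / (n + 1) := by ring
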